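/- For a symmetric real n×n matrix B, a positive semidefinite real n×n matrix A, and α ∈ [0,1], one has Tr(A^α B A^{1-α} B) ≤ Tr(A B²). -/

import Mathlib

open Matrix

/-- For a positive semidefinite real `n×n` matrix `A`, a symmetric matrix `B`, and
`α ∈ [0,1]`, `Tr(A^α B A^(1-α) B) ≤ Tr(A B²)`, where the matrix powers `A^α` and
`A^(1-α)` are defined via the functional calculus `x ↦ x^α` (real power) on `A`. -/
theorem trace_power_interpolation_lieb (n : ℕ) (A B : Matrix (Fin n) (Fin n) ℝ)
    (hA : A.PosSemidef) (hB : B.IsHermitian)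
    (α : ℝ) (hα0 : 0 ≤ α) (hα1 : α ≤ 1) :
    ((hA.1.cfc fun x : ℝ => x ^ α) * B * (hA.1.cfc fun x : ℝ => x ^ (1 - α)) * B).trace
      ≤ (A * B ^ 2).trace := by
  have hAh := hA.1
  set U : Matrix (Fin n) (Fin n) ℝ := (hAh.eigenvectorUnitary : Matrix (Fin n) (Fin n) ℝ) with hUdef
  have hU1 : star U * U = 1 := Matrix.mem_unitaryGroup_iff'.mp hAh.eigenvectorUnitary.2
  have hU2 : U * star U = 1 := Matrix.mem_unitaryGroup_iff.mp hAh.eigenvectorUnitary.2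
  set d : Fin n → ℝ := hAh.eigenvalues with hddef
  set C : Matrix (Fin n) (Fin n) ℝ := star U * B * U with hCdef
  have hCH : Cᴴ = C := by
    rw [hCdef, Matrix.star_eq_conjTranspose]
    have hBt : Bᵀ = B := hB.eq
    simp [Matrix.conjTranspose_mul, hBt, Matrix.mul_assoc]
  have hCsymm : ∀ i j, C j i = C i j := by
    intro i j
    have := congrFun (congrFun hCH i) j
    simpa [Matrix.conjTranspose_apply] using this
  have key : ∀ f g : ℝ → ℝ,
      ((hAh.cfc f) * B * (hAh.cfc g) * B).trace
        = ∑ i, ∑ j, f (d i) * C i j * (g (d j) * C j i) := by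
    intro f g
    have hcfc : ∀ h : ℝ → ℝ, hAh.cfc h = U * Matrix.diagonal (fun i => h (d i)) * star U := by
      intro h
      rw [Matrix.IsHermitian.cfc]
      congr 1
    rw [hcfc f, hcfc g]
    have : U * Matrix.diagonal (fun i => f (d i)) * star U * B *
        (U * Matrix.diagonal (fun i => g (d i)) * star U) * B
        = U * (Matrix.diagonal (fun i => f (d i)) * C *
            Matrix.diagonal (fun i => g (d i)) * C) * star U := by
      simp only [hCdef, Matrix.mul_assoc, hU2, Matrix.mul_one]
    rw [this, Matrix.trace_mul_cycle, ← Matrix.mul_assoc, hU1, Matrix.one_mul]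
    simp [Matrix.trace, Matrix.diag, Matrix.mul_apply, Matrix.diagonal_apply, Finset.mul_sum,
      Finset.sum_mul, mul_assoc]
  have hA_eq : A = hAh.cfc id := by
    rw [Matrix.IsHermitian.cfc]
    simpa using hAh.spectral_theorem
  have hone : hAh.cfc (fun _ => (1 : ℝ)) = 1 := by
    rw [Matrix.IsHermitian.cfc]
    simp only [Function.comp_def, RCLike.ofReal_one, Matrix.diagonal_one, Matrix.mul_one]
    exact map_one _
  have hRHS : (A * B ^ 2).trace = ((hAh.cfc id) * B * (hAh.cfc fun _ => (1:ℝ)) * B).trace := by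
    rw [hone, ← hA_eq, Matrix.mul_one, sq, Matrix.mul_assoc]
  rw [hRHS, key, key]
  have hdnn : ∀ i, 0 ≤ d i := fun i => hA.eigenvalues_nonneg i
  calc ∑ i, ∑ j, (d i) ^ α * C i j * ((d j) ^ (1 - α) * C j i)
      ≤ ∑ i, ∑ j, (α * d i + (1 - α) * d j) * (C i j * C j i) := by
        refine Finset.sum_le_sum fun i _ => Finset.sum_le_sum fun j _ => ?_
        have h1 : (d i) ^ α * (d j) ^ (1 - α) ≤ α * d i + (1 - α) * d j :=
          Real.geom_mean_le_arith_mean2_weighted hα0 (by linarith) (hdnn i) (hdnn j)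
            (by ring)
        have h2 : 0 ≤ C i j * C j i := by rw [hCsymm]; exact mul_self_nonneg _
        calc (d i) ^ α * C i j * ((d j) ^ (1 - α) * C j i)
            = ((d i) ^ α * (d j) ^ (1 - α)) * (C i j * C j i) := by ring
          _ ≤ (α * d i + (1 - α) * d j) * (C i j * C j i) :=
              mul_le_mul_of_nonneg_right h1 h2
    _ = α * (∑ i, ∑ j, d i * (C i j * C j i))
        + (1 - α) * (∑ i, ∑ j, d j * (C i j * C j i)) := by
        simp only [Finset.mul_sum, ← Finset.sum_add_distrib]
        refine Finset.sum_congr rfl fun i _ => Finset.sum_congr rfl fun j _ => ?_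
        ring
    _ = ∑ i, ∑ j, d i * (C i j * C j i) := by
        have hswap : (∑ i, ∑ j, d j * (C i j * C j i))
            = ∑ i, ∑ j, d i * (C i j * C j i) := by
          rw [Finset.sum_comm]
          refine Finset.sum_congr rfl fun i _ => Finset.sum_congr rfl fun j _ => ?_
          rw [hCsymm i j]
        rw [hswap]
        ring
    _ = ∑ i, ∑ j, id (d i) * C i j * ((fun _ => (1:ℝ)) (d j) * C j i) := by
        simp [mul_assoc]
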